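/- arXiv:2108.10371 — 3 statements merged into one kernel-verified Lean document; each statement's English description precedes it below -/
import Mathlib

section
/- Let V be a 2m-dimensional real vector space, J a linear complex structure on V, and Ω a symplectic form on V compatible with J (so that g(v,w) := Ω(v,Jw) is a positive definite inner product). Then for every covector ξ ∈ V*, one has (Ω^{m-1}/(m-1)!) ∧ ξ ∧ Jξ = |ξ|_g² · (Ω^m/m!), where Jξ is defined by (Jξ)(v) = -ξ(Jv). -/
open Module

/-- The wedge product of a `p`-form and a `q`-form on a real vector space,
in the determinant convention. -/
noncomputable def wedgeForm {V : Type} [AddCommGroup V] [Module ℝ V] {p q : ℕ}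
    (α : V [⋀^Fin p]→ₗ[ℝ] ℝ) (β : V [⋀^Fin q]→ₗ[ℝ] ℝ) : V [⋀^Fin (p + q)]→ₗ[ℝ] ℝ :=
  (TensorProduct.lid ℝ ℝ).toLinearMap.compAlternatingMap
    ((α.domCoprod β).domDomCongr finSumFinEquiv)

/-- The `k`-th wedge power of a `2`-form. -/
noncomputable def wpow {V : Type} [AddCommGroup V] [Module ℝ V]
    (ω : V [⋀^Fin 2]→ₗ[ℝ] ℝ) : (k : ℕ) → V [⋀^Fin (2 * k)]→ₗ[ℝ] ℝ
  | 0 => (AlternatingMap.constOfIsEmpty ℝ V (Fin 0) (1 : ℝ)).domDomCongr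
      (finCongr (by omega : (0 : ℕ) = 2 * 0))
  | (k + 1) => (wedgeForm ω (wpow ω k)).domDomCongr
      (finCongr (by omega : 2 + 2 * k = 2 * (k + 1)))

/-- A linear functional, seen as a `1`-form (alternating map on `Fin 1`). -/
noncomputable def oneForm {V : Type} [AddCommGroup V] [Module ℝ V] (ξ : V →ₗ[ℝ] ℝ) :
    V [⋀^Fin 1]→ₗ[ℝ] ℝ :=
  AlternatingMap.ofSubsingleton ℝ V ℝ (0 : Fin 1) ξ

namespace Aux

variable {V : Type} [AddCommGroup V] [Module ℝ V]

/-- Concatenated product of two scalar-valued multilinear maps. -/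
noncomputable def mulM {p q : ℕ} (f : MultilinearMap ℝ (fun _ : Fin p => V) ℝ)
    (g : MultilinearMap ℝ (fun _ : Fin q => V) ℝ) :
    MultilinearMap ℝ (fun _ : Fin (p + q) => V) ℝ :=
  (TensorProduct.lid ℝ ℝ).toLinearMap.compMultilinearMap
    ((f.domCoprod g).domDomCongr finSumFinEquiv)

theorem mulM_apply {p q : ℕ} (f : MultilinearMap ℝ (fun _ : Fin p => V) ℝ)
    (g : MultilinearMap ℝ (fun _ : Fin q => V) ℝ) (v : Fin (p + q) → V) :
    mulM f g v = f (fun i => v (Fin.castAdd q i)) * g (fun j => v (Fin.natAdd p j)) := by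
  simp [mulM, MultilinearMap.domCoprod, MultilinearMap.domDomCongr]

/-- alternatization commutes with domDomCongr along an equivalence. -/
theorem alternatization_domDomCongr {ι₁ ι₂ : Type} [DecidableEq ι₁] [Fintype ι₁]
    [DecidableEq ι₂] [Fintype ι₂] {N : Type*} [AddCommGroup N] [Module ℝ N]
    (e : ι₁ ≃ ι₂) (f : MultilinearMap ℝ (fun _ : ι₁ => V) N) :
    MultilinearMap.alternatization (f.domDomCongr e)
      = (MultilinearMap.alternatization f).domDomCongr e := by
  ext v
  rw [MultilinearMap.alternatization_apply, AlternatingMap.domDomCongr_apply,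
    MultilinearMap.alternatization_apply]
  refine (Fintype.sum_equiv e.permCongr
    (fun σ : Equiv.Perm ι₁ => Equiv.Perm.sign σ • f.domDomCongr σ (fun i => v (e i)))
    (fun σ : Equiv.Perm ι₂ => Equiv.Perm.sign σ • (f.domDomCongr e).domDomCongr σ v)
    (fun σ => ?_)).symm
  rw [Equiv.Perm.sign_permCongr]
  have : (f.domDomCongr e).domDomCongr (e.permCongr σ) v = f.domDomCongr σ (fun i => v (e i)) := by
    simp only [MultilinearMap.domDomCongr_apply]
    congr 1
    ext i
    simp [Equiv.permCongr_apply]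
  rw [this]

theorem alt_mulM {p q : ℕ} (f : MultilinearMap ℝ (fun _ : Fin p => V) ℝ)
    (g : MultilinearMap ℝ (fun _ : Fin q => V) ℝ) :
    MultilinearMap.alternatization (mulM f g)
      = wedgeForm (MultilinearMap.alternatization f) (MultilinearMap.alternatization g) := by
  unfold mulM wedgeForm
  rw [LinearMap.compMultilinearMap_alternatization, alternatization_domDomCongr,
    MultilinearMap.domCoprod_alternization]

theorem alternatization_smul {ι : Type} [DecidableEq ι] [Fintype ι] (a : ℝ)
    (f : MultilinearMap ℝ (fun _ : ι => V) ℝ) :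
    MultilinearMap.alternatization (a • f) = a • MultilinearMap.alternatization f := by
  ext v
  simp only [MultilinearMap.alternatization_apply, AlternatingMap.smul_apply, Finset.smul_sum,
    MultilinearMap.domDomCongr_apply, MultilinearMap.smul_apply]
  refine Finset.sum_congr rfl fun σ _ => ?_
  rw [smul_comm]

theorem domCoprod_smul_left {p q : ℕ} (a : ℝ) (α : V [⋀^Fin p]→ₗ[ℝ] ℝ)
    (β : V [⋀^Fin q]→ₗ[ℝ] ℝ) :
    AlternatingMap.domCoprod (a • α) β = a • AlternatingMap.domCoprod α β := by
  rw [← AlternatingMap.domCoprod'_apply, ← AlternatingMap.domCoprod'_apply,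
    ← TensorProduct.smul_tmul', map_smul]

theorem domCoprod_smul_right {p q : ℕ} (a : ℝ) (α : V [⋀^Fin p]→ₗ[ℝ] ℝ)
    (β : V [⋀^Fin q]→ₗ[ℝ] ℝ) :
    AlternatingMap.domCoprod α (a • β) = a • AlternatingMap.domCoprod α β := by
  rw [← AlternatingMap.domCoprod'_apply, ← AlternatingMap.domCoprod'_apply,
    TensorProduct.tmul_smul, map_smul]

theorem wedgeForm_smul_left {p q : ℕ} (a : ℝ) (α : V [⋀^Fin p]→ₗ[ℝ] ℝ)
    (β : V [⋀^Fin q]→ₗ[ℝ] ℝ) :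
    wedgeForm (a • α) β = a • wedgeForm α β := by
  unfold wedgeForm
  rw [domCoprod_smul_left, AlternatingMap.domDomCongr_smul, LinearMap.compAlternatingMap_smul]

theorem wedgeForm_smul_right {p q : ℕ} (a : ℝ) (α : V [⋀^Fin p]→ₗ[ℝ] ℝ)
    (β : V [⋀^Fin q]→ₗ[ℝ] ℝ) :
    wedgeForm α (a • β) = a • wedgeForm α β := by
  unfold wedgeForm
  rw [domCoprod_smul_right, AlternatingMap.domDomCongr_smul, LinearMap.compAlternatingMap_smul]

/-- position equiv : row/column encoding of `Fin (2*k)`. -/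
def EE (k : ℕ) : Fin k × Bool ≃ Fin (2 * k) where
  toFun x := ⟨2 * (x.1 : ℕ) + (if x.2 then 1 else 0), by
    obtain ⟨⟨i, hi⟩, s⟩ := x; cases s <;> simp <;> omega⟩
  invFun a := (⟨(a : ℕ) / 2, by omega⟩, decide ((a : ℕ) % 2 = 1))
  left_inv := by
    rintro ⟨⟨i, hi⟩, s⟩
    cases s <;> simp [Prod.ext_iff, Fin.ext_iff] <;> omega
  right_inv := by
    rintro ⟨a, ha⟩
    by_cases h : a % 2 = 1 <;> simp [h, Fin.ext_iff] <;> omega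

noncomputable def Pk (ω : MultilinearMap ℝ (fun _ : Fin 2 => V) ℝ) :
    (k : ℕ) → MultilinearMap ℝ (fun _ : Fin (2 * k) => V) ℝ
  | 0 => (MultilinearMap.constOfIsEmpty ℝ (fun _ : Fin 0 => V) 1).domDomCongr
      (finCongr (by omega : (0 : ℕ) = 2 * 0))
  | (k + 1) => (mulM ω (Pk ω k)).domDomCongr (finCongr (by omega : 2 + 2 * k = 2 * (k + 1)))

theorem Pk_apply (ω : MultilinearMap ℝ (fun _ : Fin 2 => V) ℝ) (k : ℕ) (v : Fin (2 * k) → V) :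
    Pk ω k v = ∏ i : Fin k, ω ![v (EE k (i, false)), v (EE k (i, true))] := by
  induction k with
  | zero => simp [Pk]
  | succ k ih =>
    show (mulM ω (Pk ω k)).domDomCongr (finCongr _) v = _
    rw [MultilinearMap.domDomCongr_apply, mulM_apply, ih, Fin.prod_univ_succ]
    congr 1
    · congr 1
      funext i
      fin_cases i
      · simp only [Matrix.cons_val_zero]
        exact congrArg v (Fin.ext (by simp [EE, finCongr]))
      · simp only [Matrix.cons_val_one, Matrix.head_cons]
        exact congrArg v (Fin.ext (by simp [EE, finCongr]; exact (Nat.mod_eq_of_lt (by omega)).symm))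
    · refine Finset.prod_congr rfl fun i _ => ?_
      have h1 : (finCongr (by omega : 2 + 2*k = 2*(k+1))) (Fin.natAdd 2 ((EE k) (i, false)))
          = (EE (k+1)) (i.succ, false) := Fin.ext (by simp [EE, finCongr]; omega)
      have h2 : (finCongr (by omega : 2 + 2*k = 2*(k+1))) (Fin.natAdd 2 ((EE k) (i, true)))
          = (EE (k+1)) (i.succ, true) := Fin.ext (by simp [EE, finCongr]; omega)
      rw [h1, h2]

theorem wpow_eq (Ω : V [⋀^Fin 2]→ₗ[ℝ] ℝ) (k : ℕ) :
    wpow Ω k = ((2:ℝ)^k)⁻¹ • MultilinearMap.alternatization (Pk (↑Ω) k) := by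
  induction k with
  | zero =>
    ext v
    show (AlternatingMap.constOfIsEmpty ℝ V (Fin 0) (1:ℝ)) _ = _
    rw [AlternatingMap.smul_apply, MultilinearMap.alternatization_apply]
    haveI : IsEmpty (Fin (2 * 0)) := ⟨fun a => absurd a.isLt (by omega)⟩
    rw [Fintype.sum_subsingleton _ (1 : Equiv.Perm (Fin (2*0)))]
    simp [Pk]
  | succ k ih =>
    have hΩ : Ω = (2:ℝ)⁻¹ • MultilinearMap.alternatization
        ((↑Ω : MultilinearMap ℝ (fun _ : Fin 2 => V) ℝ)) := by
      rw [AlternatingMap.coe_alternatization]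
      have : (Fintype.card (Fin 2)).factorial = 2 := by simp [Nat.factorial]
      rw [this, ← Nat.cast_smul_eq_nsmul ℝ, smul_smul]
      norm_num
    show (wedgeForm Ω (wpow Ω k)).domDomCongr _ = _
    rw [ih]
    nth_rewrite 1 [hΩ]
    rw [wedgeForm_smul_left, wedgeForm_smul_right, ← alt_mulM, smul_smul,
      AlternatingMap.domDomCongr_smul, ← alternatization_domDomCongr]
    conv_rhs => rw [Pk]
    congr 1
    rw [pow_succ, mul_inv]
    ring

end Aux

namespace Aux2

open Equiv

variable {n : ℕ}

def Phi (π : Perm (Fin n)) (c : Fin n → Bool) : Perm (Fin n × Bool) :=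
  (Equiv.prodCongrRight fun i => if c i then Equiv.swap false true else Equiv.refl Bool).trans
    (Equiv.prodCongrLeft fun _ => π)

theorem Phi_apply (π : Perm (Fin n)) (c : Fin n → Bool) (i : Fin n) (s : Bool) :
    Phi π c (i, s) = (π i, xor (c i) s) := by
  cases s <;> rcases h : c i <;>
    simp [Phi, Equiv.prodCongrRight, Equiv.prodCongrLeft, h, Equiv.swap_apply_def]

theorem sign_Phi (π : Perm (Fin n)) (c : Fin n → Bool) :
    Perm.sign (Phi π c) = ∏ i, (if c i then (-1 : ℤˣ) else 1) := by
  have h : Phi π c = (Equiv.prodCongrLeft fun _ : Bool => π)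
      * (Equiv.prodCongrRight fun i => if c i then Equiv.swap false true else Equiv.refl Bool) :=
    rfl
  rw [h, map_mul, Perm.sign_prodCongrLeft, Perm.sign_prodCongrRight]
  have h1 : ∏ _b : Bool, Perm.sign π = 1 := by
    rw [Finset.prod_const]
    have : (Finset.univ : Finset Bool).card = 2 := by simp
    rw [this, sq, Int.units_mul_self]
  rw [h1, one_mul]
  refine Finset.prod_congr rfl fun i _ => ?_
  rcases h2 : c i <;> simp [h2, Equiv.Perm.sign_swap]

theorem Phi_injective :
    Function.Injective (fun pc : Perm (Fin n) × (Fin n → Bool) => Phi pc.1 pc.2) := by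
  rintro ⟨π, c⟩ ⟨π', c'⟩ h
  have h' : ∀ i, (π i, c i) = (π' i, c' i) := by
    intro i
    have := congrFun (congrArg (fun (e : Perm (Fin n × Bool)) => (e : Fin n × Bool → Fin n × Bool)) h) (i, false)
    simpa [Phi_apply] using this
  simp only [Prod.mk.injEq]
  constructor
  · exact Equiv.ext fun i => (Prod.mk.injEq _ _ _ _).mp (h' i) |>.1
  · exact funext fun i => (Prod.mk.injEq _ _ _ _).mp (h' i) |>.2

theorem bool_trichotomy {a b c : Bool} (hab : a ≠ b) : c = a ∨ c = b := by
  cases a <;> cases b <;> cases c <;> simp_all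

theorem bool_ne_not {x y : Bool} (h : x ≠ y) : y = !x := by
  cases x <;> cases y <;> simp_all

/-- If all rows except possibly `l` are mapped within single rows, so is row `l`. -/
theorem row_forced (τ : Perm (Fin n × Bool)) (l : Fin n)
    (h : ∀ i, i ≠ l → (τ (i, false)).1 = (τ (i, true)).1) :
    (τ (l, false)).1 = (τ (l, true)).1 := by
  by_contra hne
  set a := τ (l, false) with ha
  set p : Fin n × Bool := (a.1, !a.2) with hp
  obtain ⟨⟨j, s⟩, hjs⟩ : ∃ x, τ x = p := ⟨τ.symm p, τ.apply_symm_apply p⟩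
  have hjl : j ≠ l := by
    rintro rfl
    cases s
    · rw [← ha] at hjs
      have : a.2 = !a.2 := congrArg Prod.snd hjs
      simp at this
    · exact hne (by rw [hjs])
  have hrow := h j hjl
  have hfst : (τ (j, !s)).1 = a.1 := by
    cases s
    · show (τ (j, true)).1 = a.1
      rw [← hrow, hjs]
    · show (τ (j, false)).1 = a.1
      rw [hrow, hjs]
  have hneq : τ (j, !s) ≠ p := by
    intro hc
    have := τ.injective (hc.trans hjs.symm)
    simp [Prod.ext_iff] at this
  have hsnd : (τ (j, !s)).2 = a.2 := by
    rcases bool_trichotomy (a := a.2) (b := !a.2) (c := (τ (j, !s)).2) (by simp) with h1 | h1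
    · exact h1
    · exact absurd (show τ (j, !s) = p by rw [hp]; exact Prod.ext hfst h1) hneq
  have : τ (j, !s) = τ (l, false) := by rw [← ha]; exact Prod.ext hfst hsnd
  have := τ.injective this
  exact hjl (congrArg Prod.fst this)

theorem sum_perm_eq (t : Perm (Fin n × Bool) → ℝ)
    (h0 : ∀ τ, (∃ i, (τ (i, false)).1 ≠ (τ (i, true)).1) → t τ = 0) :
    ∑ τ : Perm (Fin n × Bool), t τ
      = ∑ π : Perm (Fin n), ∑ c : Fin n → Bool, t (Phi π c) := by
  classical
  have himg : ∀ τ ∈ Finset.univ,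
      τ ∉ Finset.image (fun pc : Perm (Fin n) × (Fin n → Bool) => Phi pc.1 pc.2) Finset.univ →
      t τ = 0 := by
    intro τ _ hτ
    apply h0
    by_contra hall
    push_neg at hall
    have hinj : Function.Injective fun i => (τ (i, false)).1 := by
      intro i j hij
      have hij2 : (τ (i, false)).1 = (τ (j, false)).1 := hij
      by_contra hij'
      have hx : τ (i, false) ≠ τ (i, true) := fun hc => by
        simpa [Prod.ext_iff] using τ.injective hc
      have hsne : (τ (i, false)).2 ≠ (τ (i, true)).2 := by
        intro hs
        exact hx (Prod.ext (hall i) hs)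
      rcases bool_trichotomy hsne (c := (τ (j, false)).2) with h1 | h1
      · have : τ (j, false) = τ (i, false) := Prod.ext hij2.symm h1
        exact hij' (congrArg Prod.fst (τ.injective this)).symm
      · have : τ (j, false) = τ (i, true) := Prod.ext (hij2.symm.trans (hall i)) h1
        have := τ.injective this
        simp [Prod.ext_iff] at this
    let π : Perm (Fin n) := Equiv.ofBijective _ (Finite.injective_iff_bijective.mp hinj)
    apply hτ
    refine Finset.mem_image.mpr ⟨(π, fun i => (τ (i, false)).2), Finset.mem_univ _, ?_⟩
    apply Equiv.ext
    rintro ⟨i, s⟩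
    rw [Phi_apply]
    have hπ : π i = (τ (i, false)).1 := rfl
    cases s
    · simp only [Bool.xor_false]
      exact Prod.ext hπ rfl
    · have hx : τ (i, false) ≠ τ (i, true) := fun hc => by
        simpa [Prod.ext_iff] using τ.injective hc
      have hsne : (τ (i, false)).2 ≠ (τ (i, true)).2 := fun hs => hx (Prod.ext (hall i) hs)
      have hnn : (τ (i, true)).2 = !(τ (i, false)).2 := bool_ne_not hsne
      simp only [Bool.xor_true]
      exact Prod.ext (hπ.trans (hall i)) hnn.symm
  rw [← Finset.sum_subset (Finset.subset_univ _) himg,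
    Finset.sum_image (fun a _ b _ hab => Phi_injective hab)]
  exact Fintype.sum_prod_type _

theorem term_one (B : Fin n × Bool → Fin n × Bool → ℝ)
    (hB1 : ∀ (j : Fin n) (b : Bool), B (j, b) (j, !b) = (if b then -1 else 1))
    (π : Perm (Fin n)) (c : Fin n → Bool) :
    ((Perm.sign (Phi π c) : ℤ) : ℝ) * ∏ i, B (Phi π c (i, false)) (Phi π c (i, true)) = 1 := by
  rw [sign_Phi]
  have h1 : ∏ i, B (Phi π c (i, false)) (Phi π c (i, true))
      = ∏ i, (if c i then (-1:ℝ) else 1) := by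
    refine Finset.prod_congr rfl fun i _ => ?_
    rw [Phi_apply, Phi_apply, Bool.xor_false, Bool.xor_true, hB1]
  rw [h1]
  have h2 : (((∏ i, (if c i then (-1 : ℤˣ) else 1) : ℤˣ) : ℤ) : ℝ)
      = ∏ i, (if c i then (-1:ℝ) else 1) := by
    push_cast
    refine Finset.prod_congr rfl fun i _ => ?_
    rcases h : c i <;> simp [h]
  rw [h2, ← Finset.prod_mul_distrib]
  rw [Finset.prod_eq_one]
  intro i _
  rcases h : c i <;> simp [h]

theorem core1 (B : Fin n × Bool → Fin n × Bool → ℝ)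
    (hB0 : ∀ p q, p.1 ≠ q.1 → B p q = 0)
    (hB1 : ∀ (j : Fin n) (b : Bool), B (j, b) (j, !b) = (if b then -1 else 1)) :
    ∑ τ : Perm (Fin n × Bool),
        ((Perm.sign τ : ℤ) : ℝ) * ∏ i, B (τ (i, false)) (τ (i, true))
      = 2 ^ n * n.factorial := by
  rw [sum_perm_eq _ (fun τ ⟨i, hi⟩ => by
    rw [Finset.prod_eq_zero (Finset.mem_univ i) (hB0 _ _ hi), mul_zero])]
  have : ∀ π : Perm (Fin n), ∀ c : Fin n → Bool,
      ((Perm.sign (Phi π c) : ℤ) : ℝ) * ∏ i, B (Phi π c (i, false)) (Phi π c (i, true)) = 1 :=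
    term_one B hB1
  simp only [this, Finset.sum_const, Finset.card_univ, nsmul_eq_mul, mul_one]
  rw [Fintype.card_perm, Fintype.card_fun]
  push_cast
  simp [mul_comm]

theorem sum_fun_eval {N : ℕ} (l : Fin N) (F : Bool → ℝ) :
    ∑ c : Fin N → Bool, F (c l) = 2 ^ (N - 1) * ∑ b : Bool, F b := by
  classical
  rw [Fintype.sum_equiv (Equiv.funSplitAt l Bool) (fun c => F (c l)) (fun p => F p.1)
    (fun c => rfl)]
  rw [Fintype.sum_prod_type]
  have hcard : Fintype.card ({ j // j ≠ l } → Bool) = 2 ^ (N - 1) := by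
    simp [Fintype.card_fun, Fintype.card_subtype_compl]
  simp only [Finset.sum_const, Finset.card_univ, hcard, nsmul_eq_mul]
  rw [← Finset.mul_sum]
  push_cast
  ring

theorem sum_perm_eval {N : ℕ} (l : Fin (N + 1)) (G : Fin (N + 1) → ℝ) :
    ∑ π : Perm (Fin (N + 1)), G (π l) = N.factorial * ∑ j, G j := by
  have h1 : ∑ π : Perm (Fin (N + 1)), G (π l)
      = ∑ π : Perm (Fin (N + 1)), G (π 0) :=
    (Fintype.sum_bijective (fun π => π * Equiv.swap 0 l)
      (Equiv.mulRight _).bijective (fun π => G (π 0)) (fun π => G (π l)) (fun π => by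
        show G (π 0) = G ((π * Equiv.swap 0 l) l)
        rw [Equiv.Perm.mul_apply, Equiv.swap_apply_right])).symm
  rw [h1, ← Fintype.sum_equiv Equiv.Perm.decomposeFin.symm
    (fun p => G p.1) (fun π => G (π 0))
    (fun p => by
      obtain ⟨a, e⟩ := p
      show G a = G (Equiv.Perm.decomposeFin.symm (a, e) 0)
      rw [Equiv.Perm.decomposeFin_symm_apply_zero])]
  rw [Fintype.sum_prod_type]
  simp only [Finset.sum_const, Finset.card_univ, Fintype.card_perm, nsmul_eq_mul]
  rw [← Finset.mul_sum]
  simp [Fintype.card_fin]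

theorem core2 {N : ℕ} (B : Fin (N+1) × Bool → Fin (N+1) × Bool → ℝ)
    (x y : Fin (N+1) × Bool → ℝ)
    (hB0 : ∀ p q, p.1 ≠ q.1 → B p q = 0)
    (hB1 : ∀ (j : Fin (N+1)) (b : Bool), B (j, b) (j, !b) = (if b then -1 else 1))
    (hy1 : ∀ j, y (j, false) = - x (j, true)) (hy2 : ∀ j, y (j, true) = x (j, false)) :
    ∑ τ : Perm (Fin (N+1) × Bool), ((Perm.sign τ : ℤ) : ℝ) *
        ((∏ i : Fin N, B (τ (i.castSucc, false)) (τ (i.castSucc, true)))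
          * (x (τ (Fin.last N, false)) * y (τ (Fin.last N, true))))
      = 2 ^ N * N.factorial * ∑ p, x p ^ 2 := by
  classical
  rw [sum_perm_eq _ (fun τ ⟨i, hi⟩ => by
    obtain ⟨j, hjl, hj⟩ : ∃ j, j ≠ Fin.last N ∧ (τ (j, false)).1 ≠ (τ (j, true)).1 := by
      by_cases hil : i = Fin.last N
      · subst hil
        by_contra hc
        push_neg at hc
        exact hi (row_forced τ (Fin.last N) fun j hj => hc j hj)
      · exact ⟨i, hil, hi⟩
    obtain ⟨j', rfl⟩ := Fin.exists_castSucc_eq.mpr hjl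
    rw [Finset.prod_eq_zero (Finset.mem_univ j') (hB0 _ _ hj), zero_mul, mul_zero])]
  have hterm : ∀ (π : Perm (Fin (N+1))) (c : Fin (N+1) → Bool),
      ((Perm.sign (Phi π c) : ℤ) : ℝ) *
        ((∏ i : Fin N, B (Phi π c (i.castSucc, false)) (Phi π c (i.castSucc, true)))
          * (x (Phi π c (Fin.last N, false)) * y (Phi π c (Fin.last N, true))))
      = x (π (Fin.last N), c (Fin.last N)) ^ 2 := by
    intro π c
    rw [sign_Phi]
    have h2 : (((∏ i, (if c i then (-1 : ℤˣ) else 1) : ℤˣ) : ℤ) : ℝ)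
        = ∏ i, (if c i then (-1:ℝ) else 1) := by
      push_cast
      refine Finset.prod_congr rfl fun i _ => ?_
      rcases h : c i <;> simp [h]
    rw [h2]
    have h1 : ∏ i : Fin N, B (Phi π c (i.castSucc, false)) (Phi π c (i.castSucc, true))
        = ∏ i : Fin N, (if c i.castSucc then (-1:ℝ) else 1) := by
      refine Finset.prod_congr rfl fun i _ => ?_
      rw [Phi_apply, Phi_apply, Bool.xor_false, Bool.xor_true, hB1]
    rw [h1, Fin.prod_univ_castSucc (f := fun i => (if c i then (-1:ℝ) else 1))]
    rw [Phi_apply, Phi_apply, Bool.xor_false, Bool.xor_true]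
    set P := ∏ i : Fin N, (if c i.castSucc then (-1:ℝ) else 1) with hPdef
    have hsq : P * P = 1 := by
      rw [hPdef, ← Finset.prod_mul_distrib, Finset.prod_eq_one]
      intro i _
      rcases h : c i.castSucc <;> simp [h]
    cases hb : c (Fin.last N)
    · simp only [hb, if_false, Bool.not_false, hy2]
      calc P * 1 * (P * (x (π (Fin.last N), false) * x (π (Fin.last N), false)))
          = (P * P) * (x (π (Fin.last N), false) * x (π (Fin.last N), false)) := by ring
        _ = x (π (Fin.last N), false) ^ 2 := by rw [hsq]; ring
    · simp only [hb, if_true, Bool.not_true, hy1]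
      calc P * -1 * (P * (x (π (Fin.last N), true) * -x (π (Fin.last N), true)))
          = (P * P) * (x (π (Fin.last N), true) * x (π (Fin.last N), true)) := by ring
        _ = x (π (Fin.last N), true) ^ 2 := by rw [hsq]; ring
  simp only [hterm]
  have hin : ∀ π : Perm (Fin (N+1)),
      ∑ c : Fin (N+1) → Bool, x (π (Fin.last N), c (Fin.last N)) ^ 2
      = 2 ^ N * ∑ b : Bool, x (π (Fin.last N), b) ^ 2 := fun π => by
    simpa using sum_fun_eval (Fin.last N) (fun b => x (π (Fin.last N), b) ^ 2)
  simp only [hin]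
  rw [← Finset.mul_sum, sum_perm_eval (Fin.last N) (fun j => ∑ b, x (j, b) ^ 2),
    Fintype.sum_prod_type]
  ring

end Aux2


namespace Aux3

variable {V : Type} [AddCommGroup V] [Module ℝ V]

theorem upd0 (Ω : V [⋀^Fin 2]→ₗ[ℝ] ℝ) (x w y : V) :
    Function.update ![x, w] 0 y = ![y, w] := by
  funext i
  fin_cases i <;> simp [Function.update]

theorem upd1 (v x y : V) : Function.update ![v, x] 1 y = ![v, y] := by
  funext i
  fin_cases i <;> simp [Function.update]

variable (Ω : V [⋀^Fin 2]→ₗ[ℝ] ℝ)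

theorem om_add_left (x y w : V) : Ω ![x + y, w] = Ω ![x, w] + Ω ![y, w] := by
  rw [← upd0 Ω 0 w (x + y), ← upd0 Ω 0 w x, ← upd0 Ω 0 w y]
  exact Ω.map_update_add _ 0 x y

theorem om_smul_left (r : ℝ) (x w : V) : Ω ![r • x, w] = r * Ω ![x, w] := by
  rw [← upd0 Ω 0 w (r • x), ← upd0 Ω 0 w x]
  rw [Ω.map_update_smul _ 0 r x]
  rfl

theorem om_add_right (v x y : V) : Ω ![v, x + y] = Ω ![v, x] + Ω ![v, y] := by
  rw [← upd1 v 0 (x + y), ← upd1 v 0 x, ← upd1 v 0 y]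
  exact Ω.map_update_add _ 1 x y

theorem om_smul_right (r : ℝ) (v x : V) : Ω ![v, r • x] = r * Ω ![v, x] := by
  rw [← upd1 v 0 (r • x), ← upd1 v 0 x, Ω.map_update_smul _ 1 r x]
  rfl

theorem om_zero_left (w : V) : Ω ![0, w] = 0 := by
  have := om_smul_left Ω 0 0 w
  simpa using this

theorem om_antisymm (v w : V) : Ω ![w, v] = -Ω ![v, w] := by
  have h : ![v, w] ∘ Equiv.swap (0 : Fin 2) 1 = ![w, v] := by
    funext i
    fin_cases i <;> simp [Equiv.swap_apply_def]
  have := Ω.map_swap (v := ![v, w]) (show (0 : Fin 2) ≠ 1 by decide)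
  rw [h] at this
  rw [this]

theorem om_neg_right (v x : V) : Ω ![v, -x] = -Ω ![v, x] := by
  have := om_smul_right Ω (-1) v x
  simpa using this

end Aux3

section Main

open Aux3

variable {V : Type} [AddCommGroup V] [Module ℝ V]

theorem exists_unitary_family {m : ℕ} [FiniteDimensional ℝ V] (hdim : finrank ℝ V = 2 * m)
    (J : V →ₗ[ℝ] V) (hJJ : ∀ v, J (J v) = -v)
    (Ω : V [⋀^Fin 2]→ₗ[ℝ] ℝ)
    (hcompat : ∀ v w : V, Ω ![J v, J w] = Ω ![v, w])
    (hpos : ∀ v : V, v ≠ 0 → 0 < Ω ![v, J v]) :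
    ∃ f : Fin m → V, (∀ i j, Ω ![f i, J (f j)] = if i = j then 1 else 0) ∧
      (∀ i j, Ω ![f i, f j] = 0) := by
  classical
  -- complex module structure
  letI : SMul ℂ V := ⟨fun a v => a.re • v + a.im • J v⟩
  have hsm : ∀ (a : ℂ) (v : V), a • v = a.re • v + a.im • J v := fun _ _ => rfl
  letI : MulAction ℂ V :=
    { one_smul := fun v => by rw [hsm]; simp
      mul_smul := fun a b v => by
        rw [hsm, hsm, hsm, map_add, map_smul, map_smul, hJJ, Complex.mul_re, Complex.mul_im]
        module }
  letI : DistribMulAction ℂ V :=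
    { smul_zero := fun a => by rw [hsm]; simp
      smul_add := fun a v w => by rw [hsm, hsm, hsm, map_add]; module }
  letI : Module ℂ V :=
    { add_smul := fun a b v => by
        rw [hsm, hsm, hsm, Complex.add_re, Complex.add_im]
        module
      zero_smul := fun v => by rw [hsm]; simp }
  haveI : IsScalarTower ℝ ℂ V := ⟨fun r a v => by
    rw [hsm, hsm, Complex.smul_re, Complex.smul_im]
    simp only [smul_eq_mul]
    module⟩
  -- inner product core
  let gg : V → V → ℝ := fun v w => Ω ![v, J w]
  have hgsymm : ∀ v w, gg v w = gg w v := by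
    intro v w
    show Ω ![v, J w] = Ω ![w, J v]
    have h1 : Ω ![w, J v] = Ω ![J w, J (J v)] := (hcompat w (J v)).symm
    rw [h1, hJJ, om_neg_right, om_antisymm Ω v (J w), neg_neg]
  have hgskew : ∀ v w, gg (J v) w = -gg v (J w) := by
    intro v w
    show Ω ![J v, J w] = -Ω ![v, J (J w)]
    rw [hcompat, hJJ, om_neg_right, neg_neg]
  letI core : InnerProductSpace.Core ℂ V :=
    { inner := fun v w => ⟨gg v w, gg (J v) w⟩
      conj_inner_symm := fun x y => by
        apply Complex.ext
        · simpa using hgsymm y x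
        · show -(gg (J y) x) = gg (J x) y
          rw [hgskew y x, neg_neg]
          exact hgsymm y (J x)
      re_inner_nonneg := fun x => by
        show 0 ≤ gg x x
        rcases eq_or_ne x 0 with rfl | hx
        · show (0:ℝ) ≤ Ω ![0, J 0]
          rw [om_zero_left]
        · exact (hpos x hx).le
      add_left := fun x y z => by
        apply Complex.ext
        · show Ω ![x + y, J z] = Ω ![x, J z] + Ω ![y, J z]
          rw [om_add_left]
        · show Ω ![J (x + y), J z] = Ω ![J x, J z] + Ω ![J y, J z]
          rw [map_add, om_add_left]
      smul_left := fun x y r => by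
        apply Complex.ext
        · show Ω ![r.re • x + r.im • J x, J y] = ((starRingEnd ℂ) r * ⟨gg x y, gg (J x) y⟩).re
          rw [om_add_left, om_smul_left, om_smul_left, Complex.mul_re]
          simp only [Complex.conj_re, Complex.conj_im]
          show r.re * Ω ![x, J y] + r.im * Ω ![J x, J y]
            = r.re * Ω ![x, J y] - -r.im * Ω ![J x, J y]
          ring
        · show Ω ![J (r.re • x + r.im • J x), J y] = ((starRingEnd ℂ) r * ⟨gg x y, gg (J x) y⟩).im
          rw [map_add, map_smul, map_smul, hJJ, om_add_left, om_smul_left]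
          rw [show ((-x : V) : V) = (-1 : ℝ) • x by simp, om_smul_left, om_smul_left]
          rw [Complex.mul_im]
          simp only [Complex.conj_re, Complex.conj_im]
          show r.re * Ω ![J x, J y] + r.im * (-1 * Ω ![x, J y])
            = r.re * Ω ![J x, J y] + -r.im * Ω ![x, J y]
          ring
      definite := fun x hx => by
        by_contra hx0
        have h1 : gg x x = 0 := by
          have := congrArg Complex.re hx
          simpa using this
        exact absurd h1 (ne_of_gt (hpos x hx0)) }
  letI : NormedAddCommGroup V := @InnerProductSpace.Core.toNormedAddCommGroup ℂ V _ _ _ core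
  letI : InnerProductSpace ℂ V := InnerProductSpace.ofCore core.toCore
  haveI : FiniteDimensional ℂ V := Module.Finite.of_restrictScalars_finite ℝ ℂ V
  have hrank : finrank ℂ V = m := by
    have h2 : finrank ℝ ℂ * finrank ℂ V = finrank ℝ V := finrank_mul_finrank ℝ ℂ V
    rw [Complex.finrank_real_complex, hdim] at h2
    omega
  let ob := stdOrthonormalBasis ℂ V
  let f : Fin m → V := fun i => ob (finCongr hrank.symm i)
  have hON := ob.orthonormal
  rw [orthonormal_iff_ite] at hON
  have key : ∀ i j : Fin m, (inner ℂ (f i) (f j) : ℂ) = if i = j then 1 else 0 := by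
    intro i j
    rw [hON]
    by_cases h : i = j
    · subst h; simp
    · rw [if_neg (by simpa [Fin.ext_iff] using h), if_neg h]
  refine ⟨f, fun i j => ?_, fun i j => ?_⟩
  · have := congrArg Complex.re (key i j)
    exact (by simpa [Complex.ext_iff, apply_ite Complex.re] using this :
      (inner ℂ (f i) (f j)).re = if i = j then 1 else 0)
  · have := congrArg Complex.im (key i j)
    have h2 : gg (J (f i)) (f j) = 0 := by
      exact (by simpa [apply_ite Complex.im] using this : (inner ℂ (f i) (f j)).im = 0)
    show Ω ![f i, f j] = 0
    rw [← hcompat]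
    exact h2

end Main


open Aux Aux2 Aux3 Equiv

/-- If `(V, J, Ω)` is a `2m`-dimensional linear almost-Kähler structure
(`J² = -1`, `Ω` a `J`-invariant alternating 2-form such that `g(v,w) := Ω(v, Jw)` is positive
definite), then for every covector `ξ` with Riesz representative `z` (i.e. `ξ(v) = g(z,v)`),
one has `(Ω^{m-1}/(m-1)!) ∧ ξ ∧ Jξ = |ξ|_g² · Ω^m/m!`, where `Jξ(v) = -ξ(Jv)` and
`|ξ|_g² = g(z,z)`. -/
theorem wedge_power_covector_identity {m : ℕ} (hm : 1 ≤ m) {V : Type}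
    [AddCommGroup V] [Module ℝ V] [FiniteDimensional ℝ V]
    (hdim : finrank ℝ V = 2 * m)
    (J : V →ₗ[ℝ] V) (hJ : J ∘ₗ J = -LinearMap.id)
    (Ω : V [⋀^Fin 2]→ₗ[ℝ] ℝ)
    (hcompat : ∀ v w : V, Ω ![J v, J w] = Ω ![v, w])
    (hpos : ∀ v : V, v ≠ 0 → 0 < Ω ![v, J v])
    (ξ : V →ₗ[ℝ] ℝ) (z : V) (hz : ∀ v : V, ξ v = Ω ![z, J v]) :
    (((m - 1).factorial : ℝ))⁻¹ •
        ((wedgeForm (wpow Ω (m - 1)) (wedgeForm (oneForm ξ) (oneForm (-(ξ ∘ₗ J))))).domDomCongr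
          (finCongr (by omega : 2 * (m - 1) + (1 + 1) = 2 * m)))
      = (Ω ![z, J z] * ((m.factorial : ℝ))⁻¹) • wpow Ω m := by
  classical
  obtain ⟨n, rfl⟩ : ∃ n, m = n + 1 := ⟨m - 1, by omega⟩
  have hJJ : ∀ v, J (J v) = -v := fun v => by
    have := LinearMap.ext_iff.mp hJ v
    simpa using this
  obtain ⟨f, hO1, hO2⟩ := exists_unitary_family hdim J hJJ Ω hcompat hpos
  have gsymm : ∀ v w : V, Ω ![v, J w] = Ω ![w, J v] := by
    intro v w
    have h1 : Ω ![w, J v] = Ω ![J w, J (J v)] := (hcompat w (J v)).symm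
    rw [h1, hJJ, om_neg_right, om_antisymm Ω v (J w), neg_neg]
  set U : Fin (n + 1) × Bool → V := fun p => if p.2 then J (f p.1) else f p.1 with hU
  set u : Fin (2 * (n + 1)) → V := fun a => U ((EE (n + 1)).symm a) with hu
  have hUE : ∀ p, u (EE (n + 1) p) = U p := fun p => by
    rw [hu]
    simp
  -- the pairing values
  have hB0 : ∀ p q : Fin (n + 1) × Bool, p.1 ≠ q.1 → Ω ![U p, U q] = 0 := by
    rintro ⟨i, s⟩ ⟨j, t⟩ hij
    have hij' : i ≠ j := hij
    cases s <;> cases t <;> simp only [hU]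
    · exact hO2 i j
    · simpa using (hO1 i j).trans (if_neg hij')
    · show Ω ![J (f i), f j] = 0
      rw [om_antisymm Ω (f j) (J (f i))]  -- careful direction below
      rw [hO1 j i, if_neg (Ne.symm hij')]
      ring
    · show Ω ![J (f i), J (f j)] = 0
      rw [hcompat]
      exact hO2 i j
  have hB1 : ∀ (j : Fin (n + 1)) (b : Bool), Ω ![U (j, b), U (j, !b)] = (if b then -1 else 1) := by
    intro j b
    cases b <;> simp only [hU]
    · simpa using (hO1 j j).trans (if_pos rfl)
    · show Ω ![J (f j), f j] = (-1 : ℝ)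
      rw [om_antisymm Ω (f j) (J (f j)), hO1 j j, if_pos rfl]
  have hBg : ∀ p q : Fin (n + 1) × Bool, Ω ![U p, J (U q)] = if p = q then 1 else 0 := by
    rintro ⟨i, s⟩ ⟨j, t⟩
    cases t
    · have hJq : J (U (j, false)) = U (j, true) := by simp [hU]
      rw [hJq]
      rcases eq_or_ne i j with rfl | hij
      · cases s
        · rw [if_pos rfl]
          have h := hB1 i false
          simp at h
          exact h
        · have : Ω ![U (i, true), U (i, true)] = 0 := by
            simp only [hU]
            show Ω ![J (f i), J (f i)] = 0
            rw [hcompat]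
            exact hO2 i i
          rw [this, if_neg (by simp)]
      · rw [hB0 _ _ (by simpa using hij), if_neg (by simp [hij])]
    · have hJq : J (U (j, true)) = -U (j, false) := by
        simp only [hU]
        show J (J (f j)) = -(f j)
        exact hJJ (f j)
      rw [hJq, om_neg_right]
      rcases eq_or_ne i j with rfl | hij
      · cases s
        · have : Ω ![U (i, false), U (i, false)] = 0 := hO2 i i
          rw [this, if_neg (by simp), neg_zero]
        · have h := hB1 i true
          simp at h
          rw [h, if_pos rfl, neg_neg]
      · rw [hB0 _ _ (by simpa using hij), if_neg (by simp [hij]), neg_zero]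
  have hu_g : ∀ a c : Fin (2 * (n + 1)), Ω ![u a, J (u c)] = if a = c then 1 else 0 := by
    intro a c
    rw [hu]
    simp only []
    rw [hBg]
    exact if_congr (EE (n + 1)).symm.injective.eq_iff rfl rfl
  -- linear functionals v ↦ Ω ![a, J v]
  have φdef : ∀ v : V, ∃ L : V →ₗ[ℝ] ℝ, ∀ w, L w = Ω ![v, J w] := fun v =>
    ⟨{ toFun := fun w => Ω ![v, J w]
       map_add' := fun a b => by
         show Ω ![v, J (a + b)] = Ω ![v, J a] + Ω ![v, J b]
         rw [map_add, om_add_right]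
       map_smul' := fun r a => by
         show Ω ![v, J (r • a)] = r * Ω ![v, J a]
         rw [map_smul, om_smul_right] }, fun _ => rfl⟩
  have hindep : LinearIndependent ℝ u := by
    rw [Fintype.linearIndependent_iff]
    intro gc hgc a
    obtain ⟨L, hL⟩ := φdef (u a)
    have h1 : L (∑ c, gc c • u c) = gc a := by
      rw [map_sum]
      have h2 : ∀ c, L (gc c • u c) = gc c * (if a = c then 1 else 0) := fun c => by
        rw [map_smul, smul_eq_mul, hL, hu_g]
      simp only [h2, mul_ite, mul_one, mul_zero]
      simp
    rw [hgc, map_zero] at h1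
    exact h1.symm
  have hcard : Fintype.card (Fin (2 * (n + 1))) = finrank ℝ V := by simp [hdim]
  let bV : Basis (Fin (2 * (n + 1))) ℝ V := basisOfLinearIndependentOfCardEqFinrank hindep hcard
  have hbV : ⇑bV = u := coe_basisOfLinearIndependentOfCardEqFinrank hindep hcard
  have hrepr : ∑ c, bV.repr z c • u c = z := by
    have := Basis.sum_repr bV z
    rwa [hbV] at this
  have hxi : ∀ a, ξ (u a) = bV.repr z a := by
    intro a
    obtain ⟨L, hL⟩ := φdef (u a)
    have h1 : ξ (u a) = L z := by rw [hz, hL, gsymm]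
    have h2 : ∀ c, L (bV.repr z c • u c) = bV.repr z c * (if a = c then 1 else 0) := fun c => by
      rw [map_smul, smul_eq_mul, hL, hu_g]
    have h3 : L z = bV.repr z a := by
      conv_lhs => rw [← hrepr]
      rw [map_sum]
      simp only [h2, mul_ite, mul_one, mul_zero]
      simp
    rw [h1, h3]
  have hgz : ∑ a, ξ (u a) ^ 2 = Ω ![z, J z] := by
    have h1 : Ω ![z, J z] = ξ z := (hz z).symm
    calc ∑ a, ξ (u a) ^ 2 = ∑ a, bV.repr z a * ξ (u a) := by
          refine Finset.sum_congr rfl fun a _ => ?_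
          rw [← hxi a, sq]
        _ = ξ z := by
          conv_rhs => rw [← hrepr]
          rw [map_sum]
          refine (Finset.sum_congr rfl fun a _ => ?_).symm
          rw [map_smul, smul_eq_mul]
        _ = Ω ![z, J z] := h1.symm
  -- normal forms
  set η := -(ξ ∘ₗ J) with hηdef
  have h1forms : wedgeForm (oneForm ξ) (oneForm η)
      = MultilinearMap.alternatization (mulM (↑(oneForm ξ)) (↑(oneForm η))) := by
    rw [alt_mulM]
    congr 1 <;>
      · rw [AlternatingMap.coe_alternatization]
        simp
  set T' : MultilinearMap ℝ (fun _ : Fin (2 * (n + 1)) => V) ℝ :=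
    (mulM (Pk (↑Ω) n) (mulM (↑(oneForm ξ)) (↑(oneForm η)))).domDomCongr
      (finCongr (by omega : 2 * n + (1 + 1) = 2 * (n + 1))) with hT'def
  have hLHS : ((n.factorial : ℝ))⁻¹ •
        ((wedgeForm (wpow Ω n) (wedgeForm (oneForm ξ) (oneForm η))).domDomCongr
          (finCongr (by omega : 2 * n + (1 + 1) = 2 * (n + 1))))
      = (((n.factorial : ℝ))⁻¹ * ((2:ℝ)^n)⁻¹) • MultilinearMap.alternatization T' := by
    rw [wpow_eq, wedgeForm_smul_left, h1forms, ← alt_mulM, AlternatingMap.domDomCongr_smul,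
      ← alternatization_domDomCongr, smul_smul]
  -- closed form of T'
  have hTapp : ∀ w : Fin (2 * (n + 1)) → V, T' w
      = (∏ i : Fin n, Ω ![w (EE (n + 1) (i.castSucc, false)), w (EE (n + 1) (i.castSucc, true))])
        * (ξ (w (EE (n + 1) (Fin.last n, false)))
            * (-(ξ (J (w (EE (n + 1) (Fin.last n, true))))))) := by
    intro w
    rw [hT'def, MultilinearMap.domDomCongr_apply, mulM_apply, Pk_apply, mulM_apply]
    congr 1
  -- evaluation of the two alternatizations at u
  have hPval : MultilinearMap.alternatization (Pk (↑Ω) (n + 1)) u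
      = 2 ^ (n + 1) * (((n + 1).factorial : ℝ)) := by
    have hre : ∀ τ : Perm (Fin (n + 1) × Bool),
        ((Perm.sign τ : ℤ) : ℝ) * ∏ i, Ω ![U (τ (i, false)), U (τ (i, true))]
          = Perm.sign ((EE (n + 1)).permCongr τ) •
              (Pk (↑Ω) (n + 1)).domDomCongr ((EE (n + 1)).permCongr τ) u := by
      intro τ
      have hup : ∀ p : Fin (n + 1) × Bool,
          u (((EE (n + 1)).permCongr τ) (EE (n + 1) p)) = U (τ p) := fun p => by
        rw [Equiv.permCongr_apply, Equiv.symm_apply_apply, hUE]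
      rw [Perm.sign_permCongr, MultilinearMap.domDomCongr_apply, Pk_apply, Units.smul_def,
        zsmul_eq_mul]
      simp only [hup, AlternatingMap.coe_multilinearMap]
    rw [MultilinearMap.alternatization_apply,
      ← Fintype.sum_equiv ((EE (n + 1)).permCongr)
        (fun τ : Perm (Fin (n + 1) × Bool) =>
          ((Perm.sign τ : ℤ) : ℝ) * ∏ i, Ω ![U (τ (i, false)), U (τ (i, true))])
        (fun σ => Perm.sign σ • (Pk (↑Ω) (n + 1)).domDomCongr σ u) hre,
      core1 _ hB0 hB1]
  have hTval : MultilinearMap.alternatization T' u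
      = 2 ^ n * (n.factorial : ℝ) * Ω ![z, J z] := by
    have hre : ∀ τ : Perm (Fin (n + 1) × Bool),
        ((Perm.sign τ : ℤ) : ℝ) *
            ((∏ i : Fin n, Ω ![U (τ (i.castSucc, false)), U (τ (i.castSucc, true))])
              * (ξ (U (τ (Fin.last n, false))) * (-(ξ (J (U (τ (Fin.last n, true))))))))
          = Perm.sign ((EE (n + 1)).permCongr τ) •
              T'.domDomCongr ((EE (n + 1)).permCongr τ) u := by
      intro τ
      have hup : ∀ p : Fin (n + 1) × Bool,
          u (((EE (n + 1)).permCongr τ) (EE (n + 1) p)) = U (τ p) := fun p => by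
        rw [Equiv.permCongr_apply, Equiv.symm_apply_apply, hUE]
      rw [Perm.sign_permCongr, Units.smul_def, zsmul_eq_mul, MultilinearMap.domDomCongr_apply,
        hTapp]
      simp only [hup]
    have hy2 : ∀ j : Fin (n + 1), (fun p => -(ξ (J (U p)))) (j, true)
        = (fun p => ξ (U p)) (j, false) := by
      intro j
      simp only [hU]
      show -(ξ (J (J (f j)))) = ξ (f j)
      rw [hJJ, map_neg, neg_neg]
    have hsum : ∑ p : Fin (n + 1) × Bool, ξ (U p) ^ 2 = Ω ![z, J z] := by
      rw [Fintype.sum_equiv (EE (n + 1)) (fun p => ξ (U p) ^ 2) (fun a => ξ (u a) ^ 2)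
        (fun p => by show ξ (U p) ^ 2 = ξ (u (EE (n + 1) p)) ^ 2; rw [hUE])]
      exact hgz
    rw [MultilinearMap.alternatization_apply,
      ← Fintype.sum_equiv ((EE (n + 1)).permCongr)
        (fun τ : Perm (Fin (n + 1) × Bool) =>
          ((Perm.sign τ : ℤ) : ℝ) *
            ((∏ i : Fin n, Ω ![U (τ (i.castSucc, false)), U (τ (i.castSucc, true))])
              * (ξ (U (τ (Fin.last n, false))) * (-(ξ (J (U (τ (Fin.last n, true)))))))))
        (fun σ => Perm.sign σ • T'.domDomCongr σ u) hre,
      core2 (fun p q => Ω ![U p, U q]) (fun p => ξ (U p)) (fun p => -(ξ (J (U p))))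
        hB0 hB1 (fun j => by simp [hU]) hy2, hsum]
  -- final assembly
  show ((n.factorial : ℝ))⁻¹ •
        ((wedgeForm (wpow Ω n) (wedgeForm (oneForm ξ) (oneForm η))).domDomCongr
          (finCongr (by omega : 2 * n + (1 + 1) = 2 * (n + 1))))
      = (Ω ![z, J z] * (((n + 1).factorial : ℝ))⁻¹) • wpow Ω (n + 1)
  rw [hLHS, wpow_eq]
  rw [(MultilinearMap.alternatization T').eq_smul_basis_det bV,
    (MultilinearMap.alternatization (Pk (↑Ω) (n + 1))).eq_smul_basis_det bV]
  rw [hbV, hTval, hPval]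
  simp only [smul_smul]
  congr 1
  have h2 : ((2:ℝ)^n) ≠ 0 := by positivity
  have h3 : ((2:ℝ)^(n+1)) ≠ 0 := by positivity
  have h4 : ((n.factorial : ℝ)) ≠ 0 := Nat.cast_ne_zero.mpr n.factorial_ne_zero
  have h5 : (((n+1).factorial : ℝ)) ≠ 0 := Nat.cast_ne_zero.mpr (n+1).factorial_ne_zero
  field_simp
end

section
/- (Pointwise Wirtinger gap estimate) Let ξ = v₁ ∧ v₂ be a unit simple 2-vector in ℝ^{2m} (v₁, v₂ orthonormal for the standard inner product), and let Ω₀ be the standard symplectic form with compatible complex structure J₀. If ⟨Ω₀, ξ⟩ ≥ 1 - ε for some ε ∈ [0,1], then there exists a J₀-invariant unit simple 2-vector ξ₀ (of the form e ∧ J₀e with |e|=1) such that |ξ - ξ₀|² ≤ 2ε. -/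
/-- The real inner product on `ℂ^m`: `⟨a, b⟩_ℝ = Re ⟪a, b⟫_ℂ`. -/
noncomputable def rinner {m : ℕ} (a b : EuclideanSpace ℂ (Fin m)) : ℝ :=
  ((inner ℂ a b : ℂ)).re

/-- The induced inner product of the simple 2-vectors `a ∧ b` and `c ∧ d`:
`⟨a∧b, c∧d⟩ = ⟨a,c⟩⟨b,d⟩ − ⟨a,d⟩⟨b,c⟩`. -/
noncomputable def inner2 {m : ℕ} (a b c d : EuclideanSpace ℂ (Fin m)) : ℝ :=
  rinner a c * rinner b d - rinner a d * rinner b c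

/-- The squared distance `|a∧b − c∧d|²` of two simple 2-vectors. -/
noncomputable def dist2sq {m : ℕ} (a b c d : EuclideanSpace ℂ (Fin m)) : ℝ :=
  inner2 a b a b + inner2 c d c d - 2 * inner2 a b c d

/-- pointwise Wirtinger gap estimate: if `ξ = v₁ ∧ v₂` is a unit simple
2-vector in `ℝ^{2m} ≅ ℂ^m` with `⟨Ω₀, ξ⟩ = Ω₀(v₁, v₂) = ⟨J₀v₁, v₂⟩ ≥ 1 − ε` for some
`ε ∈ [0,1]`, then there is a `J₀`-invariant unit simple 2-vector `ξ₀ = e ∧ J₀e` (`‖e‖ = 1`)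
with `|ξ − ξ₀|² ≤ 2ε`. -/
theorem wirtinger_gap (m : ℕ) (v₁ v₂ : EuclideanSpace ℂ (Fin m))
    (h₁ : ‖v₁‖ = 1) (h₂ : ‖v₂‖ = 1) (h₁₂ : rinner v₁ v₂ = 0)
    (ε : ℝ) (hε0 : 0 ≤ ε) (hε1 : ε ≤ 1)
    (h : 1 - ε ≤ rinner (Complex.I • v₁) v₂) :
    ∃ e : EuclideanSpace ℂ (Fin m), ‖e‖ = 1 ∧
      dist2sq v₁ v₂ e (Complex.I • e) ≤ 2 * ε := by
  refine ⟨v₁, h₁, ?_⟩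
  have hv₁ : (inner ℂ v₁ v₁ : ℂ) = 1 := by
    rw [inner_self_eq_norm_sq_to_K, h₁]; norm_num
  have hv₂ : (inner ℂ v₂ v₂ : ℂ) = 1 := by
    rw [inner_self_eq_norm_sq_to_K, h₂]; norm_num
  simp only [dist2sq, inner2, rinner, inner_smul_left, inner_smul_right,
    hv₁, hv₂, Complex.conj_I, h₁₂] at *
  simp only [Complex.mul_re, Complex.I_re, Complex.I_im, Complex.one_re,
    Complex.one_im, Complex.neg_re, Complex.neg_im, Complex.mul_im, mul_one] at *
  have hc : (inner ℂ v₂ v₁ : ℂ) = starRingEnd ℂ (inner ℂ v₁ v₂) := by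
    rw [← inner_conj_symm]
  rw [hc] at *
  simp only [Complex.conj_re, Complex.conj_im] at *
  nlinarith [h, h₁₂]
end

section
/- (Uniqueness of weak limits via vanishing residual mass) Let T be a (2m-2)-current on B, and suppose T = T_j + R_j for each j ∈ ℕ where: each T_j has a unique tangent cone at 0 (i.e. (Φ_ρ)_* T_j converges to a single limit C_j as ρ → 0⁺ along all sequences); and lim_{j→∞} lim sup_{ρ→0⁺} M(R_j ⟍ B_ρ)/ρ^{2m-2} = 0. If (Φ_{ρ_k})_* T ⇀ C_∞ and (Φ_{ρ'_k})_* T ⇀ C'_∞ for sequences ρ_k, ρ'_k → 0⁺, then M(C_∞ - C'_∞) = 0, i.e. T has a unique tangent cone at 0. -/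
open Filter

/-- STATEMENT 18 (uniqueness of tangent cones via vanishing residual mass), formalized in
the abstract setting it uses (currents are not available in Mathlib): `V` is the space of
`(2m-2)`-currents with the weak topology, `M` is the mass (nonnegative, subadditive,
symmetric and sequentially lower semicontinuous), and `Φ ρ` is the blow-up operator
`T ↦ (Φ_ρ)_* T` (so that `M (Φ ρ R)` plays the role of `M(R ⟍ B_ρ)/ρ^{2m-2}`).
If `T = T_j + R_j` where each `T_j` has a unique tangent cone at `0` and the residual
blow-up masses vanish, `lim_j limsup_{ρ→0⁺} M(Φ ρ (R_j)) = 0`, then any two subsequential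
blow-up limits `C₁, C₂` of `T` satisfy `M(C₁ − C₂) = 0`, i.e. the tangent cone is
unique. -/
theorem unique_tangent_cone_via_residual {V : Type}
    [AddCommGroup V] [TopologicalSpace V] [IsTopologicalAddGroup V]
    (M : V → ℝ) (hM0 : ∀ v, 0 ≤ M v)
    (hMadd : ∀ v w, M (v + w) ≤ M v + M w) (hMneg : ∀ v, M (-v) = M v)
    (hMlsc : ∀ (s : ℕ → V) (v : V) (c : ℝ), Tendsto s atTop (nhds v) →
      (∀ᶠ n in atTop, M (s n) ≤ c) → M v ≤ c)
    (Φ : ℝ → V →+ V) (T : V) (Tj Rj : ℕ → V)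
    (hsplit : ∀ j, T = Tj j + Rj j)
    (huniq : ∀ j, ∃ Cj : V,
      Tendsto (fun ρ => Φ ρ (Tj j)) (nhdsWithin 0 (Set.Ioi 0)) (nhds Cj))
    (hres : ∀ ε : ℝ, 0 < ε → ∃ j : ℕ, ∃ δ : ℝ, 0 < δ ∧
      ∀ ρ : ℝ, 0 < ρ → ρ < δ → M (Φ ρ (Rj j)) ≤ ε)
    (ρ₁ ρ₂ : ℕ → ℝ) (hρ₁pos : ∀ k, 0 < ρ₁ k) (hρ₂pos : ∀ k, 0 < ρ₂ k)
    (hρ₁ : Tendsto ρ₁ atTop (nhds 0)) (hρ₂ : Tendsto ρ₂ atTop (nhds 0))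
    (C₁ C₂ : V)
    (h1 : Tendsto (fun k => Φ (ρ₁ k) T) atTop (nhds C₁))
    (h2 : Tendsto (fun k => Φ (ρ₂ k) T) atTop (nhds C₂)) :
    M (C₁ - C₂) = 0 := by
  have key : ∀ ε : ℝ, 0 < ε → M (C₁ - C₂) ≤ ε := by
    intro ε hε
    obtain ⟨j, δ, hδ, hbd⟩ := hres (ε / 2) (by linarith)
    obtain ⟨Cj, hCj⟩ := huniq j
    -- ρ₁, ρ₂ tend to 0 within Ioi 0
    have hρ₁' : Tendsto ρ₁ atTop (nhdsWithin 0 (Set.Ioi 0)) :=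
      tendsto_nhdsWithin_of_tendsto_nhds_of_eventually_within ρ₁ hρ₁
        (Eventually.of_forall hρ₁pos)
    have hρ₂' : Tendsto ρ₂ atTop (nhdsWithin 0 (Set.Ioi 0)) :=
      tendsto_nhdsWithin_of_tendsto_nhds_of_eventually_within ρ₂ hρ₂
        (Eventually.of_forall hρ₂pos)
    have hT1 : Tendsto (fun k => Φ (ρ₁ k) (Tj j)) atTop (nhds Cj) := hCj.comp hρ₁'
    have hT2 : Tendsto (fun k => Φ (ρ₂ k) (Tj j)) atTop (nhds Cj) := hCj.comp hρ₂'
    -- the residual difference sequence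
    set s : ℕ → V := fun k => Φ (ρ₁ k) (Rj j) - Φ (ρ₂ k) (Rj j) with hs
    have hsval : ∀ k, s k =
        (Φ (ρ₁ k) T - Φ (ρ₂ k) T) - (Φ (ρ₁ k) (Tj j) - Φ (ρ₂ k) (Tj j)) := by
      intro k
      have h1' : Φ (ρ₁ k) T = Φ (ρ₁ k) (Tj j) + Φ (ρ₁ k) (Rj j) := by
        rw [hsplit j, map_add]
      have h2' : Φ (ρ₂ k) T = Φ (ρ₂ k) (Tj j) + Φ (ρ₂ k) (Rj j) := by
        rw [hsplit j, map_add]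
      rw [hs]; simp only []; rw [h1', h2']; abel
    have hstend : Tendsto s atTop (nhds (C₁ - C₂)) := by
      have : Tendsto (fun k => (Φ (ρ₁ k) T - Φ (ρ₂ k) T)
          - (Φ (ρ₁ k) (Tj j) - Φ (ρ₂ k) (Tj j))) atTop
          (nhds ((C₁ - C₂) - (Cj - Cj))) := (h1.sub h2).sub (hT1.sub hT2)
      simp only [sub_self, sub_zero] at this
      exact (tendsto_congr hsval).mpr this
    have hev : ∀ᶠ k in atTop, M (s k) ≤ ε := by
      have e1 : ∀ᶠ k in atTop, ρ₁ k < δ := hρ₁.eventually (gt_mem_nhds hδ)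
      have e2 : ∀ᶠ k in atTop, ρ₂ k < δ := hρ₂.eventually (gt_mem_nhds hδ)
      filter_upwards [e1, e2] with k hk1 hk2
      have b1 : M (Φ (ρ₁ k) (Rj j)) ≤ ε / 2 := hbd _ (hρ₁pos k) hk1
      have b2 : M (Φ (ρ₂ k) (Rj j)) ≤ ε / 2 := hbd _ (hρ₂pos k) hk2
      have : M (s k) ≤ M (Φ (ρ₁ k) (Rj j)) + M (-(Φ (ρ₂ k) (Rj j))) := by
        rw [hs]; simpa [sub_eq_add_neg] using
          hMadd (Φ (ρ₁ k) (Rj j)) (-(Φ (ρ₂ k) (Rj j)))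
      rw [hMneg] at this
      linarith
    exact hMlsc s _ ε hstend hev
  have h0 : M (C₁ - C₂) ≤ 0 := by
    by_contra h
    push_neg at h
    have := key (M (C₁ - C₂) / 2) (by linarith)
    linarith
  exact le_antisymm h0 (hM0 _)
end
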